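/- Let v be a vector in E_1*V. Then for 1 ≤ i ≤ D−1 the following hold: (i) if E_i*A_{i−1}v = 0 then E_{i+1}*A_iv = 0; (ii) if E_i*A_{i+1}v = 0 then E_{i−1}*A_iv = 0. -/

import Mathlib

open Matrix Polynomial BigOperators

noncomputable section

variable {X : Type*} [Fintype X] [DecidableEq X]

/-- The `i`-th distance matrix of the graph `G` (indexed by `ℤ`; by convention it is
the zero matrix for `i < 0` and also for `i` larger than the diameter). -/
def distMat (G : SimpleGraph X) (i : ℤ) : Matrix X X ℂ :=
  Matrix.of fun y z => if (G.dist y z : ℤ) = i then (1 : ℂ) else 0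

/-- The all-ones matrix `J`. -/
def allOnes (X : Type*) : Matrix X X ℂ := Matrix.of fun _ _ => (1 : ℂ)

/-- The `i`-th dual idempotent `Eᵢ*` with respect to the base point `x`
(indexed by `ℤ`; zero for `i < 0` and for `i` larger than the diameter). -/
def dualIdem (G : SimpleGraph X) (x : X) (i : ℤ) : Matrix X X ℂ :=
  Matrix.of fun y z => if y = z ∧ (G.dist x y : ℤ) = i then (1 : ℂ) else 0

/-- The characteristic vector `sᵢ` of the `i`-th sphere around `x`. -/
def sphereVec (G : SimpleGraph X) (x : X) (i : ℤ) : X → ℂ :=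
  fun y => if (G.dist x y : ℤ) = i then (1 : ℂ) else 0

/-- `G` is distance-regular with diameter `D` and intersection numbers `p h i j`:
`G` is connected with diameter `D`, and for all `h,i,j ≤ D` and all vertices `y,z`
at distance `h`, the number of vertices `w` with `dist y w = i` and `dist w z = j`
equals `p h i j`. -/
def IsDRG (G : SimpleGraph X) (D : ℕ) (p : ℕ → ℕ → ℕ → ℕ) : Prop :=
  G.Connected ∧ (∀ y z : X, G.dist y z ≤ D) ∧ (∃ y z : X, G.dist y z = D) ∧
    ∀ h i j : ℕ, h ≤ D → i ≤ D → j ≤ D → ∀ y z : X, G.dist y z = h →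
      (Finset.univ.filter fun w => G.dist y w = i ∧ G.dist w z = j).card = p h i j

/-- The Bose–Mesner algebra `M`, the subalgebra of `Mat_X(ℂ)` generated by the
adjacency matrix. -/
def bmAlg (G : SimpleGraph X) : Subalgebra ℂ (Matrix X X ℂ) :=
  Algebra.adjoin ℂ {distMat G 1}

/-- The Terwilliger algebra `T`, generated by `A, E₀*, …, E_D*`. -/
def twAlg (G : SimpleGraph X) (x : X) (D : ℕ) : Subalgebra ℂ (Matrix X X ℂ) :=
  Algebra.adjoin ℂ ({distMat G 1} ∪ {B | ∃ i : ℕ, i ≤ D ∧ B = dualIdem G x (i : ℤ)})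

/-- `W` is a `T`-module. -/
def IsTMod (G : SimpleGraph X) (x : X) (D : ℕ) (W : Submodule ℂ (X → ℂ)) : Prop :=
  ∀ B ∈ twAlg G x D, ∀ w ∈ W, B.mulVec w ∈ W

/-- `W` is an irreducible `T`-module. -/
def IsIrredTMod (G : SimpleGraph X) (x : X) (D : ℕ) (W : Submodule ℂ (X → ℂ)) : Prop :=
  IsTMod G x D W ∧ W ≠ ⊥ ∧
    ∀ U : Submodule ℂ (X → ℂ), U ≤ W → IsTMod G x D U → U = ⊥ ∨ U = W

/-- `W` is thin: `dim Eᵢ* W ≤ 1` for `0 ≤ i ≤ D`. -/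
def IsThin (G : SimpleGraph X) (x : X) (D : ℕ) (W : Submodule ℂ (X → ℂ)) : Prop :=
  ∀ i : ℕ, i ≤ D → Module.finrank ℂ (W.map (dualIdem G x (i : ℤ)).mulVecLin) ≤ 1

/-- `W` has endpoint `1`, i.e. `E₀* W = 0` and `E₁* W ≠ 0`. -/
def HasEndpointOne (G : SimpleGraph X) (x : X) (W : Submodule ℂ (X → ℂ)) : Prop :=
  W.map (dualIdem G x 0).mulVecLin = ⊥ ∧ W.map (dualIdem G x 1).mulVecLin ≠ ⊥

/-- The linear map `P ↦ P v` on matrices. -/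
def actOn (v : X → ℂ) : Matrix X X ℂ →ₗ[ℂ] (X → ℂ) where
  toFun P := P.mulVec v
  map_add' P Q := Matrix.add_mulVec P Q v
  map_smul' c P := by simp [Matrix.smul_mulVec]

/-- The subspace `(M; v) = {P ∈ M : P v ∈ E_D* V}`. -/
def MsubV (G : SimpleGraph X) (x : X) (D : ℕ) (v : X → ℂ) : Submodule ℂ (Matrix X X ℂ) :=
  (bmAlg G).toSubmodule ⊓
    Submodule.comap (actOn v) (LinearMap.range (dualIdem G x (D : ℤ)).mulVecLin)

/-- The space `M(θ) = {Y ∈ M : (A - θI) Y ∈ ℂ A_D}` for `θ ∈ ℂ`. -/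
def pseudoSpace (G : SimpleGraph X) (D : ℕ) (θ : ℂ) : Submodule ℂ (Matrix X X ℂ) :=
  (bmAlg G).toSubmodule ⊓
    Submodule.comap (LinearMap.mulLeft ℂ (distMat G 1 - θ • 1))
      (Submodule.span ℂ {distMat G (D : ℤ)})

section helpers
variable {G : SimpleGraph X}

lemma dualIdem_mulVec (G : SimpleGraph X) (x : X) (m : ℤ) (u : X → ℂ) (z : X) :
    (dualIdem G x m).mulVec u z = if (G.dist x z : ℤ) = m then u z else 0 := by
  simp [dualIdem, Matrix.mulVec, dotProduct, ite_and, Finset.sum_ite_eq, ite_mul]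

lemma distMat_mulVec (G : SimpleGraph X) (m : ℤ) (u : X → ℂ) (z : X) :
    (distMat G m).mulVec u z = ∑ w, if (G.dist z w : ℤ) = m then u w else 0 := by
  simp [distMat, Matrix.mulVec, dotProduct, boole_mul]

lemma aux_walk_split (hc : G.Connected) {a b : X} (p : G.Walk a b) : ∀ (k : ℕ),
    k ≤ p.length → ∃ c, G.dist a c ≤ k ∧ G.dist c b ≤ p.length - k := by
  induction p with
  | @nil u =>
      intro k hk
      exact ⟨u, by simp [SimpleGraph.dist_self], by simp [SimpleGraph.dist_self]⟩
  | @cons u u' w h q ih =>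
      intro k hk
      cases k with
      | zero => exact ⟨u, by simp [SimpleGraph.dist_self],
          by simpa using SimpleGraph.dist_le (SimpleGraph.Walk.cons h q)⟩
      | succ k' =>
          obtain ⟨c, h1, h2⟩ := ih k' (by simpa using hk)
          refine ⟨c, ?_, by simpa using h2⟩
          have t := hc.dist_triangle (u := u) (v := u') (w := c)
          have ha : G.dist u u' ≤ 1 :=
            SimpleGraph.dist_le (SimpleGraph.Walk.cons h SimpleGraph.Walk.nil)
          omega

lemma exists_at_dist (hc : G.Connected) {a b : X} {n k : ℕ} (h : G.dist a b = n) (hk : k ≤ n) :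
    ∃ c, G.dist a c = k ∧ G.dist c b = n - k := by
  obtain ⟨p, hp⟩ := hc.exists_walk_length_eq_dist a b
  obtain ⟨c, h1, h2⟩ := aux_walk_split hc p k (by omega)
  have t := hc.dist_triangle (u := a) (v := c) (w := b)
  exact ⟨c, by omega, by omega⟩

lemma sum_key {x : X} {v : X → ℂ}
    (hv : ∀ z, G.dist x z ≠ 1 → v z = 0) (y : X) (c i j k : ℕ)
    (hcount : ∀ z, G.dist x z = 1 →
      (Finset.univ.filter fun w => G.dist x w = k ∧ G.dist y w = 1 ∧ G.dist w z = j).card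
        = if G.dist y z = i then c else 0)
    (H : ∀ w, G.dist x w = k → ∑ z, (if G.dist w z = j then v z else 0) = 0) :
    (c : ℂ) * ∑ z, (if G.dist y z = i then v z else 0) = 0 := by
  have step1 : (c : ℂ) * ∑ z, (if G.dist y z = i then v z else 0)
      = ∑ z, ((Finset.univ.filter fun w =>
          G.dist x w = k ∧ G.dist y w = 1 ∧ G.dist w z = j).card : ℂ) * v z := by
    rw [Finset.mul_sum]
    refine Finset.sum_congr rfl fun z _ => ?_
    by_cases hz : v z = 0
    · simp [hz]
    · have h1 : G.dist x z = 1 := by by_contra hne; exact hz (hv z hne)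
      rw [hcount z h1]
      split_ifs with h <;> simp
  rw [step1]
  have step2 : ∀ z : X, ((Finset.univ.filter fun w =>
      G.dist x w = k ∧ G.dist y w = 1 ∧ G.dist w z = j).card : ℂ)
      = ∑ w, (if G.dist x w = k ∧ G.dist y w = 1 ∧ G.dist w z = j then (1:ℂ) else 0) := by
    intro z
    rw [Finset.card_filter]
    push_cast
    exact Finset.sum_congr rfl fun w _ => by split_ifs <;> simp
  calc ∑ z, ((Finset.univ.filter fun w =>
          G.dist x w = k ∧ G.dist y w = 1 ∧ G.dist w z = j).card : ℂ) * v z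
      = ∑ z, ∑ w, (if G.dist x w = k ∧ G.dist y w = 1 ∧ G.dist w z = j
          then (1:ℂ) else 0) * v z := by
        refine Finset.sum_congr rfl fun z _ => ?_
        rw [step2 z, Finset.sum_mul]
    _ = ∑ w, ∑ z, (if G.dist x w = k ∧ G.dist y w = 1 ∧ G.dist w z = j
          then (1:ℂ) else 0) * v z := Finset.sum_comm
    _ = 0 := by
        refine Finset.sum_eq_zero fun w _ => ?_
        by_cases h1 : G.dist x w = k
        · by_cases h2 : G.dist y w = 1
          · simpa [h1, h2, ite_mul] using H w h1
          · simp [h2]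
        · simp [h1]

lemma count_i (hconn : G.Connected) {D : ℕ} {p : ℕ → ℕ → ℕ → ℕ}
    (hp : ∀ h i j : ℕ, h ≤ D → i ≤ D → j ≤ D → ∀ y z : X, G.dist y z = h →
      (Finset.univ.filter fun w => G.dist y w = i ∧ G.dist w z = j).card = p h i j)
    {x y z : X} {i : ℕ} (hi1 : 1 ≤ i) (hiD : i ≤ D)
    (hxy : G.dist x y = i + 1) (hxz : G.dist x z = 1) :
    (Finset.univ.filter fun w =>
        G.dist x w = i ∧ G.dist y w = 1 ∧ G.dist w z = i - 1).card
      = if G.dist y z = i then p i (i-1) 1 else 0 := by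
  split_ifs with h
  · rw [← hp i (i-1) 1 hiD (by omega) (by omega) z y
      (by rw [SimpleGraph.dist_comm]; exact h)]
    congr 1
    ext w
    simp only [Finset.mem_filter, Finset.mem_univ, true_and]
    constructor
    · rintro ⟨h1, h2, h3⟩
      exact ⟨by rw [SimpleGraph.dist_comm]; exact h3, by rw [SimpleGraph.dist_comm]; exact h2⟩
    · rintro ⟨h3, h2⟩
      have t1 := hconn.dist_triangle (u := x) (v := z) (w := w)
      have t2 := hconn.dist_triangle (u := x) (v := w) (w := y)
      have e1 : G.dist y w = G.dist w y := SimpleGraph.dist_comm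
      have e2 : G.dist w z = G.dist z w := SimpleGraph.dist_comm
      refine ⟨by omega, by omega, by omega⟩
  · rw [Finset.card_eq_zero, Finset.filter_eq_empty_iff]
    rintro w _ ⟨h1, h2, h3⟩
    have t1 := hconn.dist_triangle (u := y) (v := w) (w := z)
    have t2 := hconn.dist_triangle (u := x) (v := z) (w := y)
    have e1 : G.dist z y = G.dist y z := SimpleGraph.dist_comm
    omega

lemma count_ii (hconn : G.Connected) {D : ℕ} {p : ℕ → ℕ → ℕ → ℕ}
    (hp : ∀ h i j : ℕ, h ≤ D → i ≤ D → j ≤ D → ∀ y z : X, G.dist y z = h →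
      (Finset.univ.filter fun w => G.dist y w = i ∧ G.dist w z = j).card = p h i j)
    {x y z : X} {i : ℕ} (hi1 : 1 ≤ i) (hiD : i + 1 ≤ D)
    (hxy : G.dist x y = i - 1) (hxz : G.dist x z = 1) :
    (Finset.univ.filter fun w =>
        G.dist x w = i ∧ G.dist y w = 1 ∧ G.dist w z = i + 1).card
      = if G.dist y z = i then p i (i+1) 1 else 0 := by
  split_ifs with h
  · rw [← hp i (i+1) 1 (by omega) hiD (by omega) z y
      (by rw [SimpleGraph.dist_comm]; exact h)]
    congr 1
    ext w
    simp only [Finset.mem_filter, Finset.mem_univ, true_and]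
    constructor
    · rintro ⟨h1, h2, h3⟩
      exact ⟨by rw [SimpleGraph.dist_comm]; exact h3, by rw [SimpleGraph.dist_comm]; exact h2⟩
    · rintro ⟨h3, h2⟩
      have t1 := hconn.dist_triangle (u := x) (v := y) (w := w)
      have t2 := hconn.dist_triangle (u := z) (v := x) (w := w)
      have e1 : G.dist y w = G.dist w y := SimpleGraph.dist_comm
      have e2 : G.dist w z = G.dist z w := SimpleGraph.dist_comm
      have e3 : G.dist z x = G.dist x z := SimpleGraph.dist_comm
      refine ⟨by omega, by omega, by omega⟩
  · rw [Finset.card_eq_zero, Finset.filter_eq_empty_iff]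
    rintro w _ ⟨h1, h2, h3⟩
    have t1 := hconn.dist_triangle (u := w) (v := y) (w := z)
    have t2 := hconn.dist_triangle (u := y) (v := x) (w := z)
    have e1 : G.dist w y = G.dist y w := SimpleGraph.dist_comm
    have e2 : G.dist y x = G.dist x y := SimpleGraph.dist_comm
    omega

end helpers

/-- Let `v ∈ E₁* V`.  Then for `1 ≤ i ≤ D-1`:
(i) if `Eᵢ* A_{i-1} v = 0` then `E_{i+1}* A_i v = 0`;
(ii) if `Eᵢ* A_{i+1} v = 0` then `E_{i-1}* A_i v = 0`. -/
theorem stmt7 (G : SimpleGraph X) (D : ℕ) (p : ℕ → ℕ → ℕ → ℕ)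
    (hdrg : IsDRG G D p) (hD : 3 ≤ D) (x : X)
    (v : X → ℂ) (hvE1 : (dualIdem G x 1).mulVec v = v)
    (i : ℕ) (hi1 : 1 ≤ i) (hi2 : i ≤ D - 1) :
    ((dualIdem G x (i : ℤ)).mulVec ((distMat G ((i : ℤ) - 1)).mulVec v) = 0 →
      (dualIdem G x ((i : ℤ) + 1)).mulVec ((distMat G (i : ℤ)).mulVec v) = 0) ∧
    ((dualIdem G x (i : ℤ)).mulVec ((distMat G ((i : ℤ) + 1)).mulVec v) = 0 →
      (dualIdem G x ((i : ℤ) - 1)).mulVec ((distMat G (i : ℤ)).mulVec v) = 0) := by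
  unfold IsDRG at hdrg
  obtain ⟨hconn, hdle, ⟨y0, z0, hy0⟩, hp⟩ := hdrg
  have hiD : i + 1 ≤ D := by omega
  have hv : ∀ z, G.dist x z ≠ 1 → v z = 0 := by
    intro z hz
    have h0 := congrFun hvE1 z
    rw [dualIdem_mulVec, if_neg (by omega)] at h0
    exact h0.symm
  have hc1 : p i (i-1) 1 ≠ 0 := by
    obtain ⟨c1, hc1, -⟩ := exists_at_dist hconn hy0 (show i ≤ D by omega)
    obtain ⟨w, hw1, hw2⟩ := exists_at_dist hconn hc1 (show i - 1 ≤ i by omega)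
    have hcard := hp i (i-1) 1 (by omega) (by omega) (by omega) y0 c1 hc1
    have hmem : w ∈ Finset.univ.filter (fun w => G.dist y0 w = i-1 ∧ G.dist w c1 = 1) := by
      simp only [Finset.mem_filter, Finset.mem_univ, true_and]
      exact ⟨hw1, by omega⟩
    rw [← hcard]
    exact Finset.card_ne_zero_of_mem hmem
  have hb1 : p i (i+1) 1 ≠ 0 := by
    obtain ⟨c1, hc1, -⟩ := exists_at_dist hconn hy0 (show i + 1 ≤ D by omega)
    obtain ⟨w, hw1, hw2⟩ := exists_at_dist hconn hc1 (show i ≤ i + 1 by omega)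
    have hcard := hp i (i+1) 1 (by omega) (by omega) (by omega) y0 w hw1
    have hmem : c1 ∈ Finset.univ.filter (fun e => G.dist y0 e = i+1 ∧ G.dist e w = 1) := by
      simp only [Finset.mem_filter, Finset.mem_univ, true_and]
      refine ⟨hc1, ?_⟩
      have := SimpleGraph.dist_comm (G := G) (u := w) (v := c1)
      omega
    rw [← hcard]
    exact Finset.card_ne_zero_of_mem hmem
  constructor
  · intro H
    have H' : ∀ w, G.dist x w = i → ∑ z, (if G.dist w z = i - 1 then v z else 0) = 0 := by
      intro w hw
      have h0 := congrFun H w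
      rw [dualIdem_mulVec, if_pos (show ((G.dist x w : ℤ) = i) by omega),
        distMat_mulVec] at h0
      simp only [Pi.zero_apply] at h0
      rw [show (∑ z, if G.dist w z = i - 1 then v z else 0)
          = ∑ z, if (G.dist w z : ℤ) = (i : ℤ) - 1 then v z else 0 from
        Finset.sum_congr rfl fun z _ => if_congr (by omega) rfl rfl]
      exact h0
    funext y
    rw [dualIdem_mulVec]
    simp only [Pi.zero_apply]
    split_ifs with hy
    · have hyn : G.dist x y = i + 1 := by omega
      rw [distMat_mulVec]
      rw [show (∑ w, if (G.dist y w : ℤ) = (i : ℤ) then v w else 0)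
          = ∑ w, if G.dist y w = i then v w else 0 from
        Finset.sum_congr rfl fun w _ => if_congr (by omega) rfl rfl]
      have key := sum_key hv y (p i (i-1) 1) i (i-1) i
        (fun z hz => count_i hconn hp hi1 (by omega) hyn hz) H'
      have hcne : ((p i (i-1) 1 : ℕ) : ℂ) ≠ 0 := Nat.cast_ne_zero.mpr hc1
      exact (mul_eq_zero.mp key).resolve_left hcne
    · rfl
  · intro H
    have H' : ∀ w, G.dist x w = i → ∑ z, (if G.dist w z = i + 1 then v z else 0) = 0 := by
      intro w hw
      have h0 := congrFun H w
      rw [dualIdem_mulVec, if_pos (show ((G.dist x w : ℤ) = i) by omega),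
        distMat_mulVec] at h0
      simp only [Pi.zero_apply] at h0
      rw [show (∑ z, if G.dist w z = i + 1 then v z else 0)
          = ∑ z, if (G.dist w z : ℤ) = (i : ℤ) + 1 then v z else 0 from
        Finset.sum_congr rfl fun z _ => if_congr (by omega) rfl rfl]
      exact h0
    funext y
    rw [dualIdem_mulVec]
    simp only [Pi.zero_apply]
    split_ifs with hy
    · have hyn : G.dist x y = i - 1 := by omega
      rw [distMat_mulVec]
      rw [show (∑ w, if (G.dist y w : ℤ) = (i : ℤ) then v w else 0)
          = ∑ w, if G.dist y w = i then v w else 0 from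
        Finset.sum_congr rfl fun w _ => if_congr (by omega) rfl rfl]
      have key := sum_key hv y (p i (i+1) 1) i (i+1) i
        (fun z hz => count_ii hconn hp hi1 (by omega) hyn hz) H'
      have hcne : ((p i (i+1) 1 : ℕ) : ℂ) ≠ 0 := Nat.cast_ne_zero.mpr hb1
      exact (mul_eq_zero.mp key).resolve_left hcne
    · rfl
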